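/- For the HIV model, the vector field ξ = (T_Iδ, -T_Iδ, 0, 0, 0, δ(δ-ρ), Nρ, 0) (in coordinates (T_U, T_I, V, λ, ρ, δ, N, c)) is orthogonal to the differentials of the three output-derived functions h₁ = V, h₂ = T_U + T_I, and h̃₁ = λ - ρT_U - δT_I, i.e., dh₁·ξ = dh₂·ξ = dh̃₁·ξ = 0. -/

import Mathlib

/-- HIV model: state x = (T_U, T_I, V, λ, ρ, δ, N, c) as x 0, ..., x 7. -/
theorem stmt_12
    (ξ : (Fin 8 → ℝ) → (Fin 8 → ℝ))
    (hξ : ∀ x, ξ x = ![x 1 * x 5, -(x 1 * x 5), 0, 0, 0,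
        x 5 * (x 5 - x 4), x 6 * x 4, 0])
    (h1 h2 ht1 : (Fin 8 → ℝ) → ℝ)
    (hh1 : ∀ x, h1 x = x 2)
    (hh2 : ∀ x, h2 x = x 0 + x 1)
    (hht1 : ∀ x, ht1 x = x 3 - x 4 * x 0 - x 5 * x 1) :
    ∀ x : Fin 8 → ℝ,
      fderiv ℝ h1 x (ξ x) = 0 ∧ fderiv ℝ h2 x (ξ x) = 0 ∧
      fderiv ℝ ht1 x (ξ x) = 0 := by
  have hp : ∀ (i : Fin 8) (x : Fin 8 → ℝ),
      HasFDerivAt (fun y : Fin 8 → ℝ => y i)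
        (ContinuousLinearMap.proj i : (Fin 8 → ℝ) →L[ℝ] ℝ) x :=
    fun i x => (ContinuousLinearMap.proj i : (Fin 8 → ℝ) →L[ℝ] ℝ).hasFDerivAt
  have e1 : h1 = fun y => y 2 := funext hh1
  have e2 : h2 = fun y => y 0 + y 1 := funext hh2
  have e3 : ht1 = fun y => y 3 - y 4 * y 0 - y 5 * y 1 := funext hht1
  subst e1 e2 e3
  intro x
  have v0 : ξ x 0 = x 1 * x 5 := by rw [hξ]; rfl
  have v1 : ξ x 1 = -(x 1 * x 5) := by rw [hξ]; rfl
  have v2 : ξ x 2 = 0 := by rw [hξ]; rfl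
  have v3 : ξ x 3 = 0 := by rw [hξ]; rfl
  have v4 : ξ x 4 = 0 := by rw [hξ]; rfl
  have v5 : ξ x 5 = x 5 * (x 5 - x 4) := by rw [hξ]; rfl
  refine ⟨?_, ?_, ?_⟩
  · rw [(hp 2 x).fderiv]
    simp [v2]
  · rw [HasFDerivAt.fderiv (f := fun y : Fin 8 → ℝ => y 0 + y 1) ((hp 0 x).add (hp 1 x))]
    simp [v0, v1]
  · rw [HasFDerivAt.fderiv (f := fun y : Fin 8 → ℝ => y 3 - y 4 * y 0 - y 5 * y 1) (((hp 3 x).sub ((hp 4 x).mul (hp 0 x))).sub ((hp 5 x).mul (hp 1 x)))]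
    simp [v0, v1, v3, v4, v5]
    ring
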